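/- Let p be a prime number with p ≡ 2 (mod 5) or p ≡ 3 (mod 5), and let t ∈ F_p satisfy t ≠ 1 and t⁴ − t³ + t² − t + 1 ≠ 0. Then the number of quadruples (x, y, z, w) ∈ F_p⁴ with (x, y, z) ≠ (0, 0, 0) and w² = y·(x − 2(t−1)y − tz)·Q(x, y, z) equals (p − 1)(p² + p + 1). Equivalently, the double cover X'_t of P² given in the weighted projective space P(1,1,1,3) by w² = y(x − 2(t−1)y − tz)Q(x, y, z) has exactly p² + p + 1 F_p-rational points. -/

import Mathlib

/-- The quartic form `Q` from Example 1.6/6.2 of the paper. -/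
def Qquartic {K : Type*} [CommRing K] (x y z : K) : K :=
  x ^ 4 + x ^ 3 * y - x ^ 3 * z + x ^ 2 * y ^ 2 - 2 * x ^ 2 * y * z + x ^ 2 * z ^ 2
    + x * y ^ 3 - 3 * x * y ^ 2 * z - 2 * x * y * z ^ 2 - x * z ^ 3
    + y ^ 4 + y ^ 3 * z + y ^ 2 * z ^ 2 + y * z ^ 3 + z ^ 4

section Aux

private lemma zmod2_dickson : ∀ b x₁ x₂ : ZMod 2,
    x₁ ^ 5 - 5 * b * x₁ ^ 3 + 5 * b ^ 2 * x₁ = x₂ ^ 5 - 5 * b * x₂ ^ 3 + 5 * b ^ 2 * x₂ →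
    x₁ = x₂ := by decide

/-- Fifth powers are injective in a finite field whose unit group has order prime to `5`. -/
private lemma pow_five_injective {F : Type*} [Field F] [Fintype F]
    (h5 : ¬ (5 ∣ Fintype.card F - 1)) : Function.Injective fun u : F => u ^ 5 := by
  intro u v h
  simp only at h
  by_cases hv : v = 0
  · subst hv
    have : u ^ 5 = 0 := by simpa using h
    exact (pow_eq_zero_iff (by norm_num)).mp this
  · have hu : u ≠ 0 := by
      rintro rfl
      exact hv ((pow_eq_zero_iff (by norm_num : (5:ℕ) ≠ 0)).mp (by simpa using h.symm))
    have ha : (u * v⁻¹) ^ 5 = 1 := by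
      rw [mul_pow, h, ← mul_pow, mul_inv_cancel₀ hv, one_pow]
    have hb : (u * v⁻¹) ^ (Fintype.card F - 1) = 1 :=
      FiniteField.pow_card_sub_one_eq_one _ (mul_ne_zero hu (inv_ne_zero hv))
    have h1 : orderOf (u * v⁻¹) ∣ 5 := orderOf_dvd_of_pow_eq_one ha
    have h2 : orderOf (u * v⁻¹) ∣ Fintype.card F - 1 := orderOf_dvd_of_pow_eq_one hb
    have ho : orderOf (u * v⁻¹) = 1 := by
      rcases ((by norm_num : Nat.Prime 5).eq_one_or_self_of_dvd _ h1) with h' | h'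
      · exact h'
      · exact absurd (h' ▸ h2) h5
    have he : u * v⁻¹ = 1 := orderOf_eq_one_iff.mp ho
    calc u = u * v⁻¹ * v := by field_simp
    _ = v := by rw [he, one_mul]

variable {p : ℕ} [Fact p.Prime]

/-- Every element of `F_p` has a square root in `F_{p²}` (for odd `p`). -/
private lemma exists_sqrt (hp2 : p ≠ 2) (a : ZMod p) :
    ∃ r : GaloisField p 2, r ^ 2 = algebraMap (ZMod p) (GaloisField p 2) a := by
  haveI : Fintype (GaloisField p 2) := Fintype.ofFinite _
  set G := GaloisField p 2
  set φ := algebraMap (ZMod p) G with hφ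
  by_cases ha : a = 0
  · exact ⟨0, by simp [ha]⟩
  have hp : p.Prime := Fact.out
  have hcard : Fintype.card G = p ^ 2 := by
    rw [← Nat.card_eq_fintype_card]; exact GaloisField.card p 2 (by norm_num)
  have hodd : p % 2 = 1 := Nat.Prime.eq_two_or_odd hp |>.resolve_left hp2
  obtain ⟨m, hm⟩ : ∃ m, p = 2 * m + 1 := ⟨p / 2, by omega⟩
  have hφa : φ a ≠ 0 := fun h0 => ha ((algebraMap (ZMod p) (GaloisField p 2)).injective (by simpa using h0))
  have key : (φ a) ^ (Fintype.card G / 2) = 1 := by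
    have h1 : Fintype.card G / 2 = (p - 1) * (m + 1) := by
      rw [hcard]
      have e1 : p ^ 2 = 4 * (m * m + m) + 1 := by subst hm; ring
      have e2 : (p - 1) * (m + 1) = 2 * (m * m + m) := by
        subst hm; simp only [Nat.add_sub_cancel]; ring
      omega
    rw [h1, pow_mul, ← map_pow, ZMod.pow_card_sub_one_eq_one ha, map_one, one_pow]
  have hchar : ringChar G ≠ 2 := by
    rw [ringChar.eq G p]; exact hp2
  obtain ⟨r, hr⟩ := (FiniteField.isSquare_iff hchar hφa).mpr key
  exact ⟨r, by rw [sq]; exact hr.symm⟩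

/-- For `b ≠ 0` in `F_p`, every `x ∈ F_p` can be written as `u + b/u` with `u ∈ F_{p²}ˣ`. -/
private lemma exists_u (hp2 : p ≠ 2) (x b : ZMod p) (hb : b ≠ 0) :
    ∃ u : GaloisField p 2, u ≠ 0 ∧
      algebraMap (ZMod p) (GaloisField p 2) x
        = u + algebraMap (ZMod p) (GaloisField p 2) b * u⁻¹ := by
  set G := GaloisField p 2
  set φ := algebraMap (ZMod p) G with hφ
  have hp : p.Prime := Fact.out
  have h2 : (2 : G) ≠ 0 := by
    intro h0
    have : ((2 : ℕ) : G) = 0 := by exact_mod_cast h0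
    exact hp2 ((Nat.prime_dvd_prime_iff_eq hp Nat.prime_two).mp
      ((CharP.cast_eq_zero_iff G p 2).mp this))
  obtain ⟨r, hr⟩ := exists_sqrt hp2 (x ^ 2 - 4 * b)
  have hr' : r ^ 2 = (φ x) ^ 2 - 4 * (φ b) := by
    rw [hr]; push_cast [map_sub, map_pow, map_mul, map_ofNat]; rfl
  set u : G := (φ x + r) / 2 with hu
  have hB : φ b ≠ 0 := fun h0 => hb ((algebraMap (ZMod p) (GaloisField p 2)).injective (by simpa using h0))
  have key : u ^ 2 - φ x * u + φ b = 0 := by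
    have h4 : (4 : G) * (u ^ 2 - φ x * u + φ b) = r ^ 2 - ((φ x) ^ 2 - 4 * (φ b)) := by
      rw [hu]; linear_combination ((φ x + r) ^ 2 * (2 * (2:G)⁻¹ + 1) - 2 * φ x * (φ x + r)) * (mul_inv_cancel₀ h2)
    have : (4 : G) * (u ^ 2 - φ x * u + φ b) = 0 := by rw [h4, hr', sub_self]
    have h4' : (4 : G) ≠ 0 := by
      have : (4 : G) = 2 * 2 := by norm_num
      rw [this]; exact mul_ne_zero h2 h2
    exact (mul_eq_zero.mp this).resolve_left h4'
  have hu0 : u ≠ 0 := by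
    intro h0
    rw [h0] at key
    simp at key
    exact hb key
  refine ⟨u, hu0, ?_⟩
  field_simp
  linear_combination -key

/-- Dickson-polynomial identity: `D₅(u + B/u, B) = u⁵ + B⁵/u⁵`. -/
private lemma dickson_value {F : Type*} [Field F] (u B : F) (hu : u ≠ 0) :
    (u + B * u⁻¹) ^ 5 - 5 * B * (u + B * u⁻¹) ^ 3 + 5 * B ^ 2 * (u + B * u⁻¹)
      = u ^ 5 + B ^ 5 * (u ^ 5)⁻¹ := by
  field_simp
  ring

/-- The Dickson polynomial `D₅(·, b)` is injective on `F_p` when `p ≡ ±2 mod 5`. -/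
private lemma dickson_inj (hp5 : p % 5 = 2 ∨ p % 5 = 3) (b : ZMod p) :
    Function.Injective fun x : ZMod p => x ^ 5 - 5 * b * x ^ 3 + 5 * b ^ 2 * x := by
  by_cases hp2 : p = 2
  · subst hp2
    exact fun {x₁ x₂} h => zmod2_dickson b x₁ x₂ h
  have hp : p.Prime := Fact.out
  have hple : 2 ≤ p := hp.two_le
  have hp25 : p ^ 2 % 5 = 4 := by
    rw [Nat.pow_mod]; rcases hp5 with h | h <;> rw [h] <;> rfl
  intro x₁ x₂ h
  simp only at h
  by_cases hb : b = 0
  · subst hb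
    have h5 : ¬ (5 ∣ Fintype.card (ZMod p) - 1) := by
      rw [ZMod.card]
      rcases hp5 with h' | h' <;> omega
    have := pow_five_injective h5 (a₁ := x₁) (a₂ := x₂) ?_
    · exact this
    · simpa using h
  · haveI : Fintype (GaloisField p 2) := Fintype.ofFinite _
    set G := GaloisField p 2
    set φ := algebraMap (ZMod p) G with hφ
    have hinj : Function.Injective φ := (algebraMap (ZMod p) (GaloisField p 2)).injective
    have hcard : Fintype.card G = p ^ 2 := by
      rw [← Nat.card_eq_fintype_card]; exact GaloisField.card p 2 (by norm_num)
    have h5G : ¬ (5 ∣ Fintype.card G - 1) := by rw [hcard]; omega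
    have hB : φ b ≠ 0 := fun h0 => hb (hinj (by simpa using h0))
    obtain ⟨u₁, hu₁0, hu₁⟩ := exists_u hp2 x₁ b hb
    obtain ⟨u₂, hu₂0, hu₂⟩ := exists_u hp2 x₂ b hb
    have hmap : φ (x₁ ^ 5 - 5 * b * x₁ ^ 3 + 5 * b ^ 2 * x₁)
        = φ (x₂ ^ 5 - 5 * b * x₂ ^ 3 + 5 * b ^ 2 * x₂) := by rw [h]
    have hpush : ∀ x : ZMod p, φ (x ^ 5 - 5 * b * x ^ 3 + 5 * b ^ 2 * x)
        = (φ x) ^ 5 - 5 * (φ b) * (φ x) ^ 3 + 5 * (φ b) ^ 2 * (φ x) := by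
      intro x; push_cast [map_sub, map_add, map_mul, map_pow, map_ofNat]; rfl
    rw [hpush, hpush, hu₁, hu₂, dickson_value _ _ hu₁0, dickson_value _ _ hu₂0] at hmap
    set U := u₁ ^ 5 with hU
    set V := u₂ ^ 5 with hV
    set C := (φ b) ^ 5 with hC
    have hU0 : U ≠ 0 := pow_ne_zero _ hu₁0
    have hV0 : V ≠ 0 := pow_ne_zero _ hu₂0
    have key : (U - V) * (U * V - C) = 0 := by
      have e : (U - V) * (U * V - C)
          = U * V * (U + C * U⁻¹) - U * V * (V + C * V⁻¹) := by
        field_simp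
        ring
      rw [e, hmap, sub_self]
    have h5inj := pow_five_injective (F := G) h5G
    rcases mul_eq_zero.mp key with h0 | h0
    · have : u₁ = u₂ := h5inj (by simpa [hU, hV] using sub_eq_zero.mp h0)
      apply hinj
      rw [hu₁, hu₂, this]
    · have hUV : (u₁ * u₂) ^ 5 = (φ b) ^ 5 := by
        rw [mul_pow, ← hU, ← hV, ← hC]; exact sub_eq_zero.mp h0
      have hprod : u₁ * u₂ = φ b := h5inj hUV
      apply hinj
      rw [hu₁, hu₂, ← hprod]
      field_simp
      ring

/-- The fiber quintic `λ ↦ λ·Q(s−2λ, λ, 1−2λ)` is a bijection of `F_p` when `p ≡ ±2 mod 5`. -/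
private lemma fiber_bij (hp5 : p % 5 = 2 ∨ p % 5 = 3) (s : ZMod p) :
    Function.Bijective fun l : ZMod p =>
      l * Qquartic (s - 2 * l) l (1 - 2 * l) := by
  have hp : p.Prime := Fact.out
  have hp5' : p ≠ 5 := by rintro rfl; omega
  have h5 : (5 : ZMod p) ≠ 0 := by
    intro h0
    have : ((5 : ℕ) : ZMod p) = 0 := by exact_mod_cast h0
    exact hp5' ((Nat.prime_dvd_prime_iff_eq hp (by norm_num)).mp
      ((CharP.cast_eq_zero_iff (ZMod p) p 5).mp this))
  have h125 : (125 : ZMod p) ≠ 0 := by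
    have e : (125 : ZMod p) = 5 * 5 * 5 := by norm_num
    rw [e]; exact mul_ne_zero (mul_ne_zero h5 h5) h5
  have hadd : ∀ c : ZMod p, Function.Bijective fun y : ZMod p => y + c := by
    intro c
    constructor
    · intro a b hab; simpa using hab
    · intro y; exact ⟨y - c, by ring⟩
  have hmul : ∀ c : ZMod p, c ≠ 0 → Function.Bijective fun y : ZMod p => c * y := by
    intro c hc
    constructor
    · intro a b hab; exact mul_left_cancel₀ hc hab
    · intro y; exact ⟨c⁻¹ * y, by field_simp⟩
  set Bc : ZMod p := -(s ^ 2 - 3 * s + 1) with hBc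
  set β : ZMod p := -(1 + s) with hβ
  set c' : ZMod p := -(β ^ 5 - 5 * Bc * β ^ 3 + 5 * Bc ^ 2 * β) with hc'
  have hpoly : ∀ l : ZMod p, 125 * (l * Qquartic (s - 2 * l) l (1 - 2 * l))
      = ((5 * l + β) ^ 5 - 5 * Bc * (5 * l + β) ^ 3 + 5 * Bc ^ 2 * (5 * l + β)) + c' := by
    intro l
    rw [hc', hBc, hβ]
    simp only [Qquartic]
    ring
  have hfun : (fun l : ZMod p => l * Qquartic (s - 2 * l) l (1 - 2 * l))
      = (fun y : ZMod p => (125 : ZMod p)⁻¹ * y)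
        ∘ (fun y : ZMod p => y + c')
        ∘ (fun x : ZMod p => x ^ 5 - 5 * Bc * x ^ 3 + 5 * Bc ^ 2 * x)
        ∘ (fun l : ZMod p => 5 * l + β) := by
    funext l
    show l * Qquartic (s - 2 * l) l (1 - 2 * l)
        = (125 : ZMod p)⁻¹ * (((5 * l + β) ^ 5 - 5 * Bc * (5 * l + β) ^ 3
            + 5 * Bc ^ 2 * (5 * l + β)) + c')
    rw [← hpoly l, inv_mul_cancel_left₀ h125]
  rw [hfun]
  have hDbij : Function.Bijective
      (fun x : ZMod p => x ^ 5 - 5 * Bc * x ^ 3 + 5 * Bc ^ 2 * x) :=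
    Finite.injective_iff_bijective.mp (dickson_inj hp5 Bc)
  have haffin : Function.Bijective (fun l : ZMod p => 5 * l + β) :=
    (hadd β).comp (hmul 5 h5)
  exact ((hmul _ (inv_ne_zero h125)).comp ((hadd c').comp (hDbij.comp haffin)))

/-- Counting `(λ, w)` with `w² = F λ` for a bijection `F` gives `p`. -/
private lemma card_sq_bij (F : ZMod p → ZMod p) (hF : Function.Bijective F) :
    Nat.card {r : ZMod p × ZMod p // r.2 ^ 2 = F r.1} = p := by
  haveI : NeZero p := ⟨(Fact.out : p.Prime).ne_zero⟩
  set e := Equiv.ofBijective F hF with he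
  have e₁ : {r : ZMod p × ZMod p // r.2 ^ 2 = F r.1}
      ≃ {r : ZMod p × ZMod p // r.2 ^ 2 = r.1} :=
    { toFun := fun a => ⟨(F a.1.1, a.1.2), a.2⟩
      invFun := fun a => ⟨(e.symm a.1.1, a.1.2), by
        have : F (e.symm a.1.1) = a.1.1 := e.apply_symm_apply a.1.1
        rw [this]; exact a.2⟩
      left_inv := fun a => by
        apply Subtype.ext
        exact Prod.ext_iff.mpr ⟨e.symm_apply_apply a.1.1, rfl⟩
      right_inv := fun a => by
        apply Subtype.ext
        exact Prod.ext_iff.mpr ⟨e.apply_symm_apply a.1.1, rfl⟩ }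
  have e₂ : {r : ZMod p × ZMod p // r.2 ^ 2 = r.1} ≃ ZMod p :=
    { toFun := fun a => a.1.2
      invFun := fun w => ⟨(w ^ 2, w), rfl⟩
      left_inv := fun a => by
        apply Subtype.ext
        exact Prod.ext_iff.mpr ⟨a.2, rfl⟩
      right_inv := fun w => rfl }
  rw [Nat.card_congr (e₁.trans e₂), Nat.card_zmod]

/-- Counting `(λ, w)` with `w² = c · (λ·Q(s−2λ,λ,1−2λ))` gives `p` for any `c`, `s`. -/
private lemma card_fiber (hp5 : p % 5 = 2 ∨ p % 5 = 3) (c s : ZMod p) :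
    Nat.card {r : ZMod p × ZMod p //
      r.2 ^ 2 = c * (r.1 * Qquartic (s - 2 * r.1) r.1 (1 - 2 * r.1))} = p := by
  haveI : NeZero p := ⟨(Fact.out : p.Prime).ne_zero⟩
  by_cases hc : c = 0
  · subst hc
    have e : {r : ZMod p × ZMod p //
        r.2 ^ 2 = 0 * (r.1 * Qquartic (s - 2 * r.1) r.1 (1 - 2 * r.1))} ≃ ZMod p :=
      { toFun := fun a => a.1.1
        invFun := fun l => ⟨(l, 0), by rw [zero_mul]; ring⟩
        left_inv := fun a => by
          apply Subtype.ext
          refine Prod.ext_iff.mpr ⟨rfl, ?_⟩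
          have h0 : a.1.2 ^ 2 = 0 := by rw [a.2, zero_mul]
          exact ((pow_eq_zero_iff (by norm_num : (2:ℕ) ≠ 0)).mp h0).symm
        right_inv := fun l => rfl }
    rw [Nat.card_congr e, Nat.card_zmod]
  · have hmul : Function.Bijective fun y : ZMod p => c * y := by
      constructor
      · intro a b hab; exact mul_left_cancel₀ hc hab
      · intro y; exact ⟨c⁻¹ * y, by field_simp⟩
    exact card_sq_bij _ (hmul.comp (fiber_bij hp5 s))

private lemma chartA_eq (t s ν l : ZMod p) :
    (l * ν) * ((s * ν - 2 * (l * ν)) - 2 * (t - 1) * (l * ν) - t * (ν - 2 * (l * ν))) *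
        Qquartic (s * ν - 2 * (l * ν)) (l * ν) (ν - 2 * (l * ν))
      = (ν ^ 6 * (s - t)) * (l * Qquartic (s - 2 * l) l (1 - 2 * l)) := by
  simp only [Qquartic]; ring

private lemma chartB_eq (t ν l : ZMod p) :
    (l * ν) * ((ν - 2 * (l * ν)) - 2 * (t - 1) * (l * ν) - t * (-(2 * (l * ν)))) *
        Qquartic (ν - 2 * (l * ν)) (l * ν) (-(2 * (l * ν)))
      = ν ^ 6 * (l * Qquartic (0 - 2 * l) l (1 - 2 * l)) := by
  simp only [Qquartic]; ring

private lemma chartC_eq (t Y : ZMod p) :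
    Y * ((-(2 * Y)) - 2 * (t - 1) * Y - t * (-(2 * Y))) *
        Qquartic (-(2 * Y)) Y (-(2 * Y)) = 0 := by
  simp only [Qquartic]; ring

end Aux

/-- **Lemma 6.4 (Qw5_count).** For a prime `p ≡ 2, 3 (mod 5)` and `t ∈ F_p` with `t ≠ 1` and
`t⁴ − t³ + t² − t + 1 ≠ 0`, the number of quadruples `(x, y, z, w) ∈ F_p⁴` with
`(x, y, z) ≠ (0,0,0)` and `w² = y·(x − 2(t−1)y − tz)·Q(x, y, z)` equals
`(p − 1)(p² + p + 1)`; equivalently, the double cover `X'_t` of `P²` has exactly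
`p² + p + 1` `F_p`-rational points. -/
theorem double_cover_point_count (p : ℕ) [Fact p.Prime] (hp : p % 5 = 2 ∨ p % 5 = 3)
    (t : ZMod p) (ht1 : t ≠ 1) (ht2 : t ^ 4 - t ^ 3 + t ^ 2 - t + 1 ≠ 0) :
    Set.ncard {q : ZMod p × ZMod p × ZMod p × ZMod p |
        ¬(q.1 = 0 ∧ q.2.1 = 0 ∧ q.2.2.1 = 0) ∧
        q.2.2.2 ^ 2
          = q.2.1 * (q.1 - 2 * (t - 1) * q.2.1 - t * q.2.2.1) * Qquartic q.1 q.2.1 q.2.2.1}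
      = (p - 1) * (p ^ 2 + p + 1) := by
  classical
  haveI : NeZero p := ⟨(Fact.out : p.Prime).ne_zero⟩
  set A : Type := {q : ZMod p × ZMod p × ZMod p × ZMod p // q.2.1 ≠ 0 ∧
    q.2.2.2 ^ 2 = (q.2.1 ^ 6 * (q.1 - t)) *
      (q.2.2.1 * Qquartic (q.1 - 2 * q.2.2.1) q.2.2.1 (1 - 2 * q.2.2.1))} with hA
  set B : Type := {q : ZMod p × ZMod p × ZMod p // q.1 ≠ 0 ∧
    q.2.2 ^ 2 = q.1 ^ 6 *
      (q.2.1 * Qquartic (0 - 2 * q.2.1) q.2.1 (1 - 2 * q.2.1))} with hB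
  set C : Type := {Y : ZMod p // Y ≠ 0} with hC
  rw [← Nat.card_coe_set_eq, Set.coe_setOf]
  have E : {q : ZMod p × ZMod p × ZMod p × ZMod p //
      ¬(q.1 = 0 ∧ q.2.1 = 0 ∧ q.2.2.1 = 0) ∧
      q.2.2.2 ^ 2
        = q.2.1 * (q.1 - 2 * (t - 1) * q.2.1 - t * q.2.2.1) * Qquartic q.1 q.2.1 q.2.2.1}
      ≃ A ⊕ (B ⊕ C) := by
    refine Equiv.symm (Equiv.mk ?_ ?_ ?_ ?_)
    · -- toFun : charts → solutions
      rintro (⟨⟨s, ν, l, w⟩, hprop⟩ | ⟨⟨ν, l, w⟩, hprop⟩ | ⟨Y, hY⟩)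
      · exact ⟨(s * ν - 2 * (l * ν), l * ν, ν - 2 * (l * ν), w),
          fun hz => hprop.1 (by linear_combination hz.2.2 + 2 * hz.2.1),
          by rw [hprop.2]; exact (chartA_eq t s ν l).symm⟩
      · exact ⟨(ν - 2 * (l * ν), l * ν, -(2 * (l * ν)), w),
          fun hz => hprop.1 (by linear_combination hz.1 + 2 * hz.2.1),
          by rw [hprop.2]; exact (chartB_eq t ν l).symm⟩
      · exact ⟨(-(2 * Y), Y, -(2 * Y), 0),
          fun hz => hY hz.2.1,
          by rw [chartC_eq t Y]; norm_num⟩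
    · -- invFun : solutions → charts
      intro q
      exact if hm : 2 * q.1.2.1 + q.1.2.2.1 = 0 then
        (if ha : q.1.1 + 2 * q.1.2.1 = 0 then
          Sum.inr (Sum.inr ⟨q.1.2.1, fun hy0 => q.2.1
            ⟨by linear_combination ha - 2 * hy0, hy0, by linear_combination hm - 2 * hy0⟩⟩)
        else
          Sum.inr (Sum.inl ⟨(q.1.1 + 2 * q.1.2.1, q.1.2.1 / (q.1.1 + 2 * q.1.2.1), q.1.2.2.2),
            ha, by
              rw [← chartB_eq t (q.1.1 + 2 * q.1.2.1) (q.1.2.1 / (q.1.1 + 2 * q.1.2.1)),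
                div_mul_cancel₀ q.1.2.1 ha,
                show q.1.1 + 2 * q.1.2.1 - 2 * q.1.2.1 = q.1.1 by ring,
                show -(2 * q.1.2.1) = q.1.2.2.1 by linear_combination -hm]
              exact q.2.2⟩))
      else
        Sum.inl ⟨((q.1.1 + 2 * q.1.2.1) / (2 * q.1.2.1 + q.1.2.2.1), 2 * q.1.2.1 + q.1.2.2.1,
            q.1.2.1 / (2 * q.1.2.1 + q.1.2.2.1), q.1.2.2.2),
          hm, by
            rw [← chartA_eq t ((q.1.1 + 2 * q.1.2.1) / (2 * q.1.2.1 + q.1.2.2.1))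
                (2 * q.1.2.1 + q.1.2.2.1) (q.1.2.1 / (2 * q.1.2.1 + q.1.2.2.1)),
              div_mul_cancel₀ q.1.2.1 hm, div_mul_cancel₀ (q.1.1 + 2 * q.1.2.1) hm,
              show q.1.1 + 2 * q.1.2.1 - 2 * q.1.2.1 = q.1.1 by ring,
              show 2 * q.1.2.1 + q.1.2.2.1 - 2 * q.1.2.1 = q.1.2.2.1 by ring]
            exact q.2.2⟩
    · -- left_inv (on charts)
      rintro (⟨⟨s, ν, l, w⟩, hν, h⟩ | ⟨⟨ν, l, w⟩, hν, h⟩ | ⟨Y, hY⟩)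
      · have hm : ¬ (2 * (l * ν) + (ν - 2 * (l * ν)) = 0) := fun hc =>
          hν (by linear_combination hc)
        have e2 : 2 * (l * ν) + (ν - 2 * (l * ν)) = ν := by ring
        have h1 : (s * ν - 2 * (l * ν) + 2 * (l * ν)) / (2 * (l * ν) + (ν - 2 * (l * ν))) = s := by
          rw [show s * ν - 2 * (l * ν) + 2 * (l * ν) = s * ν by ring, e2,
            mul_div_cancel_right₀ s hν]
        have h3 : l * ν / (2 * (l * ν) + (ν - 2 * (l * ν))) = l := by
          rw [e2, mul_div_cancel_right₀ l hν]
        dsimp only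
        rw [dif_neg hm]
        exact congrArg Sum.inl (Subtype.ext (Prod.ext_iff.mpr ⟨h1,
          Prod.ext_iff.mpr ⟨e2, Prod.ext_iff.mpr ⟨h3, rfl⟩⟩⟩))
      · have hm : 2 * (l * ν) + -(2 * (l * ν)) = 0 := by ring
        have ha : ¬ ((ν - 2 * (l * ν)) + 2 * (l * ν) = 0) := fun hc =>
          hν (by linear_combination hc)
        have e2 : (ν - 2 * (l * ν)) + 2 * (l * ν) = ν := by ring
        have h3 : l * ν / ((ν - 2 * (l * ν)) + 2 * (l * ν)) = l := by
          rw [e2, mul_div_cancel_right₀ l hν]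
        dsimp only
        rw [dif_pos hm, dif_neg ha]
        exact congrArg (Sum.inr ∘ Sum.inl) (Subtype.ext (Prod.ext_iff.mpr ⟨e2,
          Prod.ext_iff.mpr ⟨h3, rfl⟩⟩))
      · have hm : 2 * Y + -(2 * Y) = 0 := by ring
        have ha : -(2 * Y) + 2 * Y = 0 := by ring
        dsimp only
        rw [dif_pos hm, dif_pos ha]
    · -- right_inv (on solutions)
      rintro ⟨⟨x, y, z, w⟩, hne, hq⟩
      dsimp only
      by_cases hm : 2 * y + z = 0
      · by_cases ha : x + 2 * y = 0
        · rw [dif_pos hm, dif_pos ha]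
          have hw : w ^ 2 = 0 := by
            rw [hq, show x = -(2 * y) by linear_combination ha,
              show z = -(2 * y) by linear_combination hm]
            exact chartC_eq t y
          exact Subtype.ext (Prod.ext_iff.mpr ⟨by linear_combination -ha,
            Prod.ext_iff.mpr ⟨rfl, Prod.ext_iff.mpr ⟨by linear_combination -hm,
              ((pow_eq_zero_iff (by norm_num : (2:ℕ) ≠ 0)).mp hw).symm⟩⟩⟩)
        · rw [dif_pos hm, dif_neg ha]
          have h2 : y / (x + 2 * y) * (x + 2 * y) = y := div_mul_cancel₀ y ha
          have h1 : (x + 2 * y) - 2 * (y / (x + 2 * y) * (x + 2 * y)) = x := by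
            rw [h2]; ring
          have h3 : -(2 * (y / (x + 2 * y) * (x + 2 * y))) = z := by
            rw [h2]; linear_combination -hm
          exact Subtype.ext (Prod.ext_iff.mpr ⟨h1,
            Prod.ext_iff.mpr ⟨h2, Prod.ext_iff.mpr ⟨h3, rfl⟩⟩⟩)
      · rw [dif_neg hm]
        have h2 : y / (2 * y + z) * (2 * y + z) = y := div_mul_cancel₀ y hm
        have h1 : (x + 2 * y) / (2 * y + z) * (2 * y + z)
            - 2 * (y / (2 * y + z) * (2 * y + z)) = x := by
          rw [h2, div_mul_cancel₀ (x + 2 * y) hm]; ring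
        have h3 : (2 * y + z) - 2 * (y / (2 * y + z) * (2 * y + z)) = z := by
          rw [h2]; ring
        exact Subtype.ext (Prod.ext_iff.mpr ⟨h1,
          Prod.ext_iff.mpr ⟨h2, Prod.ext_iff.mpr ⟨h3, rfl⟩⟩⟩)
  rw [Nat.card_congr E, Nat.card_sum, Nat.card_sum]
  have hAcard : Nat.card A = p * (p - 1) * p := by
    have eA : A ≃ Σ i : ZMod p × {v : ZMod p // v ≠ 0},
        {r : ZMod p × ZMod p // r.2 ^ 2 = ((i.2 : ZMod p) ^ 6 * (i.1 - t)) *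
          (r.1 * Qquartic (i.1 - 2 * r.1) r.1 (1 - 2 * r.1))} :=
      { toFun := fun a => ⟨(a.1.1, ⟨a.1.2.1, a.2.1⟩), ⟨(a.1.2.2.1, a.1.2.2.2), a.2.2⟩⟩
        invFun := fun b => ⟨(b.1.1, (b.1.2 : ZMod p), b.2.1.1, b.2.1.2), b.1.2.2, b.2.2⟩
        left_inv := fun a => rfl
        right_inv := fun b => rfl }
    rw [Nat.card_congr eA, Nat.card_eq_fintype_card, Fintype.card_sigma]
    have hfib : ∀ i : ZMod p × {v : ZMod p // v ≠ 0},
        Fintype.card {r : ZMod p × ZMod p // r.2 ^ 2 = ((i.2 : ZMod p) ^ 6 * (i.1 - t)) *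
          (r.1 * Qquartic (i.1 - 2 * r.1) r.1 (1 - 2 * r.1))} = p := by
      intro i
      rw [← Nat.card_eq_fintype_card]
      exact card_fiber hp _ _
    rw [Finset.sum_congr rfl (fun i _ => hfib i), Finset.sum_const, Finset.card_univ,
      smul_eq_mul, Fintype.card_prod, ZMod.card]
    congr 1
    rw [Fintype.card_congr (unitsEquivNeZero (G₀ := ZMod p)).symm, Fintype.card_units, ZMod.card]
  have hBcard : Nat.card B = (p - 1) * p := by
    have eB : B ≃ Σ i : {v : ZMod p // v ≠ 0},
        {r : ZMod p × ZMod p // r.2 ^ 2 = (i : ZMod p) ^ 6 *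
          (r.1 * Qquartic (0 - 2 * r.1) r.1 (1 - 2 * r.1))} :=
      { toFun := fun a => ⟨⟨a.1.1, a.2.1⟩, ⟨(a.1.2.1, a.1.2.2), a.2.2⟩⟩
        invFun := fun b => ⟨((b.1 : ZMod p), b.2.1.1, b.2.1.2), b.1.2, b.2.2⟩
        left_inv := fun a => rfl
        right_inv := fun b => rfl }
    rw [Nat.card_congr eB, Nat.card_eq_fintype_card, Fintype.card_sigma]
    have hfib : ∀ i : {v : ZMod p // v ≠ 0},
        Fintype.card {r : ZMod p × ZMod p // r.2 ^ 2 = (i : ZMod p) ^ 6 *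
          (r.1 * Qquartic (0 - 2 * r.1) r.1 (1 - 2 * r.1))} = p := by
      intro i
      rw [← Nat.card_eq_fintype_card]
      have := card_fiber (p := p) hp ((i : ZMod p) ^ 6) 0
      simpa using this
    rw [Finset.sum_congr rfl (fun i _ => hfib i), Finset.sum_const, Finset.card_univ,
      smul_eq_mul]
    congr 1
    rw [Fintype.card_congr (unitsEquivNeZero (G₀ := ZMod p)).symm, Fintype.card_units, ZMod.card]
  have hCcard : Nat.card C = p - 1 := by
    rw [Nat.card_eq_fintype_card,
      Fintype.card_congr (unitsEquivNeZero (G₀ := ZMod p)).symm, Fintype.card_units, ZMod.card]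
  rw [hAcard, hBcard, hCcard]
  have hple : 2 ≤ p := (Fact.out : p.Prime).two_le
  obtain ⟨q, rfl⟩ : ∃ q, p = q + 1 := ⟨p - 1, by omega⟩
  simp only [Nat.add_sub_cancel]
  ring
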